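/- A zero-mean nonsingular Gaussian sequence [x_k], k ∈ [0,N], is reciprocal if and only if it is [k_1,N]-CM_F for every k_1 ∈ [0,N] (intervals of length less than 3 being trivially CM) and it is CM_L. -/

import Mathlib

open MeasureTheory ProbabilityTheory Matrix
open scoped NNReal

namespace CMSeqPaper

variable {Ω : Type*} [MeasurableSpace Ω]

/-- Square `d × d` real matrices. -/
abbrev Mat (d : ℕ) := Matrix (Fin d) (Fin d) ℝ

/-- `X` is a zero-mean jointly Gaussian random vector with covariance matrix `C`
(Cramér–Wold characterization: every linear functional of `X` is a centered real
Gaussian with the induced variance). -/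
def IsZeroMeanGaussian {ι : Type*} [Fintype ι] (μ : Measure Ω)
    (X : Ω → ι → ℝ) (C : Matrix ι ι ℝ) : Prop :=
  ∀ l : ι → ℝ,
    μ.map (fun ω => ∑ i, l i * X ω i) = gaussianReal 0 (l ⬝ᵥ C.mulVec l).toNNReal

/-- The stacked vector over times `0, …, N` of a `d`-dimensional sequence. -/
def stack (N d : ℕ) (x : ℕ → Ω → Fin d → ℝ) : Ω → Fin (N + 1) × Fin d → ℝ :=
  fun ω p => x (p.1 : ℕ) ω p.2

/-- `[x_k]`, `k ∈ [0,N]`, is a zero-mean nonsingular Gaussian sequence whose stacked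
vector has (positive definite) covariance matrix `C`. -/
def ZMNG (N d : ℕ) (μ : Measure Ω) (x : ℕ → Ω → Fin d → ℝ)
    (C : Matrix (Fin (N + 1) × Fin d) (Fin (N + 1) × Fin d) ℝ) : Prop :=
  (∀ k, k ≤ N → Measurable (x k)) ∧
    IsZeroMeanGaussian μ (stack N d x) C ∧ C.PosDef

/-- The σ-algebra generated by the states at the times in `S`. -/
def sigmaOf {d : ℕ} (x : ℕ → Ω → Fin d → ℝ) (S : Set ℕ) : MeasurableSpace Ω :=
  ⨆ i ∈ S, MeasurableSpace.comap (x i) inferInstance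

/-- The conditional distribution of `x k` given the states at the times in `S`
coincides (a.e.) with the conditional distribution of `x k` given the states at the
times in `T`. -/
def CondEq {d : ℕ} (μ : Measure Ω) (x : ℕ → Ω → Fin d → ℝ) (k : ℕ)
    (S T : Set ℕ) : Prop :=
  ∀ A : Set (Fin d → ℝ), MeasurableSet A →
    μ[A.indicator (fun _ => (1 : ℝ)) ∘ x k | sigmaOf x S]
      =ᵐ[μ] μ[A.indicator (fun _ => (1 : ℝ)) ∘ x k | sigmaOf x T]

/-- `[x_k]` is `[k₁,k₂]`-CM_c: for all `k₁ ≤ j < k ≤ k₂`, the conditional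
distribution of `x k` given `(x_{k₁}, …, x_j, x_c)` equals the one given `(x_j, x_c)`. -/
def IsCM {d : ℕ} (μ : Measure Ω) (x : ℕ → Ω → Fin d → ℝ) (k₁ k₂ c : ℕ) : Prop :=
  ∀ j k, k₁ ≤ j → j < k → k ≤ k₂ →
    CondEq μ x k (Set.Icc k₁ j ∪ {c}) ({j} ∪ {c})

/-- `[x_k]` is Markov on the index interval `[a,b]`. -/
def IsMarkovOn {d : ℕ} (μ : Measure Ω) (x : ℕ → Ω → Fin d → ℝ) (a b : ℕ) : Prop :=
  ∀ j k, a ≤ j → j < k → k ≤ b → CondEq μ x k (Set.Icc a j) {j}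

/-- `[x_k]` is reciprocal on `[0,N]`. -/
def IsReciprocal {d : ℕ} (μ : Measure Ω) (x : ℕ → Ω → Fin d → ℝ) (N : ℕ) : Prop :=
  ∀ j k l, j < k → k < l → l ≤ N →
    CondEq μ x k (Set.Icc 0 j ∪ Set.Icc l N) ({j} ∪ {l})

/-- Block `(i,j)` of the block matrix `A` is zero. -/
def BlockZero {n d : ℕ} (A : Matrix (Fin n × Fin d) (Fin n × Fin d) ℝ)
    (i j : Fin n) : Prop :=
  ∀ a b, A (i, a) (j, b) = 0

/-- `|i - j| ≥ 2` for block indices. -/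
def Far {n : ℕ} (i j : Fin n) : Prop :=
  (i : ℕ) + 2 ≤ (j : ℕ) ∨ (j : ℕ) + 2 ≤ (i : ℕ)

/-- Block tri-diagonal: every block `(i,j)` with `|i-j| ≥ 2` is zero. -/
def BlockTriDiag {n d : ℕ} (A : Matrix (Fin n × Fin d) (Fin n × Fin d) ℝ) : Prop :=
  ∀ i j, Far i j → BlockZero A i j

/-- The CM_L form: every block `(i,j)` with `|i-j| ≥ 2` is zero except possibly
blocks in the last block row and last block column. -/
def HasCMLForm {n d : ℕ} (A : Matrix (Fin n × Fin d) (Fin n × Fin d) ℝ) : Prop :=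
  ∀ i j, Far i j → (i : ℕ) ≠ n - 1 → (j : ℕ) ≠ n - 1 → BlockZero A i j

/-- The CM_F form: every block `(i,j)` with `|i-j| ≥ 2` is zero except possibly
blocks in the first block row and first block column. -/
def HasCMFForm {n d : ℕ} (A : Matrix (Fin n × Fin d) (Fin n × Fin d) ℝ) : Prop :=
  ∀ i j, Far i j → (i : ℕ) ≠ 0 → (j : ℕ) ≠ 0 → BlockZero A i j

/-- Cyclic block tri-diagonal: every block `(i,j)` with `|i-j| ≥ 2` is zero except
possibly the corner blocks `(0, n-1)` and `(n-1, 0)`. -/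
def CyclicBlockTriDiag {n d : ℕ} (A : Matrix (Fin n × Fin d) (Fin n × Fin d) ℝ) : Prop :=
  ∀ i j, Far i j → ¬((i : ℕ) = 0 ∧ (j : ℕ) = n - 1) →
    ¬((i : ℕ) = n - 1 ∧ (j : ℕ) = 0) → BlockZero A i j

/-- The stacked block-diagonal matrix with diagonal blocks `G 0, …, G N`. -/
def blockDiag (N d : ℕ) (G : ℕ → Mat d) :
    Matrix (Fin (N + 1) × Fin d) (Fin (N + 1) × Fin d) ℝ :=
  fun p q => if (p.1 : ℕ) = (q.1 : ℕ) then G (p.1 : ℕ) p.2 q.2 else 0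

/-- `[x_k]` obeys the CM_L model with parameters `Gm k = G_{k,k-1}` and
`GN k = G_{k,N}` for `k ∈ [1,N-1]`, boundary parameter `GN 0 = G_{0,N}`, and noise
covariances `Gcov k = G_k = Cov(e_k)`: the `e_k` are zero-mean jointly Gaussian,
mutually uncorrelated, with positive definite covariances, with
`x_k = G_{k,k-1} x_{k-1} + G_{k,N} x_N + e_k` for `k ∈ [1,N-1]`, and boundary
condition `x_N = e_N`, `x_0 = G_{0,N} x_N + e_0`. -/
def CMLModel (N d : ℕ) (μ : Measure Ω) (x : ℕ → Ω → Fin d → ℝ)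
    (Gm GN Gcov : ℕ → Mat d) : Prop :=
  ∃ e : ℕ → Ω → Fin d → ℝ,
    ZMNG N d μ e (blockDiag N d Gcov) ∧
    (∀ k, k ≤ N → (Gcov k).PosDef) ∧
    (∀ᵐ ω ∂μ,
      (∀ k, 1 ≤ k → k ≤ N - 1 →
        x k ω = (Gm k).mulVec (x (k - 1) ω) + (GN k).mulVec (x N ω) + e k ω) ∧
      x N ω = e N ω ∧ x 0 ω = (GN 0).mulVec (x N ω) + e 0 ω)

/-- `[y_k]` obeys the Markov model with parameters `Mm k = M_{k,k-1}` for
`k ∈ [1,N]` and noise covariances `Mcov k = M_k = Cov(e_k)`: the `e_k` are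
zero-mean jointly Gaussian, mutually uncorrelated, with positive definite
covariances, `y_0 = e_0` and `y_k = M_{k,k-1} y_{k-1} + e_k` for `k ∈ [1,N]`. -/
def MarkovModel (N d : ℕ) (μ : Measure Ω) (y : ℕ → Ω → Fin d → ℝ)
    (Mm Mcov : ℕ → Mat d) : Prop :=
  ∃ e : ℕ → Ω → Fin d → ℝ,
    ZMNG N d μ e (blockDiag N d Mcov) ∧
    (∀ k, k ≤ N → (Mcov k).PosDef) ∧
    (∀ᵐ ω ∂μ, y 0 ω = e 0 ω ∧
      ∀ k, 1 ≤ k → k ≤ N → y k ω = (Mm k).mulVec (y (k - 1) ω) + e k ω)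

/-- Representation of `[x_k]` as a zero-mean nonsingular Gaussian Markov sequence
plus `Γ_k x_c`, where `c ∈ {0,N}`: `y` (which coincides with `x` at time `c`) is
jointly zero-mean nonsingular Gaussian, the states of `y` at times `≠ c` are
uncorrelated with `y c = x c`, `y` is Markov on `[0,N] \ {c}`, and
`x_k = y_k + Γ_k x_c` for `k ∈ [0,N] \ {c}`. -/
def MarkovPlusVector (N d c : ℕ) (μ : Measure Ω) (x y : ℕ → Ω → Fin d → ℝ)
    (Γ : ℕ → Mat d) : Prop :=
  ∃ C' : Matrix (Fin (N + 1) × Fin d) (Fin (N + 1) × Fin d) ℝ,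
    (∀ᵐ ω ∂μ, y c ω = x c ω) ∧
    ZMNG N d μ y C' ∧
    (∀ i j : Fin (N + 1),
      (((i : ℕ) = c ∧ (j : ℕ) ≠ c) ∨ ((i : ℕ) ≠ c ∧ (j : ℕ) = c)) →
      ∀ a b, C' (i, a) (j, b) = 0) ∧
    IsMarkovOn μ y (if c = 0 then 1 else 0) (if c = 0 then N else N - 1) ∧
    (∀ᵐ ω ∂μ, ∀ k, k ≤ N → k ≠ c → x k ω = y k ω + (Γ k).mulVec (x c ω))

/-- `M_{N|k} = M_{N,N-1} ⋯ M_{k+1,k}` (with `M_{N|N} = I`), where `Mm k = M_{k,k-1}`. -/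
def MNk (d : ℕ) (Mm : ℕ → Mat d) (N k : ℕ) : Mat d :=
  (List.range (N - k)).foldl (fun A i => A * Mm (N - i)) 1

/-- `C_{N|k} = ∑_{n=k}^{N-1} M_{N|n+1} M_{n+1} M_{N|n+1}'`. -/
def CNk (d : ℕ) (Mm Mcov : ℕ → Mat d) (N k : ℕ) : Mat d :=
  ∑ n ∈ Finset.Icc k (N - 1), MNk d Mm N (n + 1) * Mcov (n + 1) * (MNk d Mm N (n + 1))ᵀ

/-- The `(N+1)d × (N+1)d` matrix `[[B₁, 0], [0, 0]]` (`B₁` occupies the first `N`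
block rows and columns). -/
def embedL (N d : ℕ) (B₁ : Matrix (Fin N × Fin d) (Fin N × Fin d) ℝ) :
    Matrix (Fin (N + 1) × Fin d) (Fin (N + 1) × Fin d) ℝ :=
  fun p q =>
    if h : (p.1 : ℕ) < N ∧ (q.1 : ℕ) < N then
      B₁ (⟨(p.1 : ℕ), h.1⟩, p.2) (⟨(q.1 : ℕ), h.2⟩, q.2)
    else 0

/-- The `(N+1)d × d` matrix `Γ = [S; I]`. -/
def gammaL (N d : ℕ) (S : Matrix (Fin N × Fin d) (Fin d) ℝ) :
    Matrix (Fin (N + 1) × Fin d) (Fin d) ℝ :=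
  fun p a =>
    if h : (p.1 : ℕ) < N then S (⟨(p.1 : ℕ), h⟩, p.2) a
    else (1 : Mat d) p.2 a

/-- The `(N+1)d × (N+1)d` matrix `[[0, 0], [0, B₂]]` (`B₂` occupies the last `N`
block rows and columns). -/
def embedF (N d : ℕ) (B₂ : Matrix (Fin N × Fin d) (Fin N × Fin d) ℝ) :
    Matrix (Fin (N + 1) × Fin d) (Fin (N + 1) × Fin d) ℝ :=
  fun p q =>
    if h : 0 < (p.1 : ℕ) ∧ 0 < (q.1 : ℕ) then
      B₂ (⟨(p.1 : ℕ) - 1, by have := p.1.isLt; omega⟩, p.2)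
        (⟨(q.1 : ℕ) - 1, by have := q.1.isLt; omega⟩, q.2)
    else 0

/-- The `(N+1)d × d` matrix `Γ = [I; S]`. -/
def gammaF (N d : ℕ) (S : Matrix (Fin N × Fin d) (Fin d) ℝ) :
    Matrix (Fin (N + 1) × Fin d) (Fin d) ℝ :=
  fun p a =>
    if h : 0 < (p.1 : ℕ) then
      S (⟨(p.1 : ℕ) - 1, by have := p.1.isLt; omega⟩, p.2) a
    else (1 : Mat d) p.2 a
/-! ### Auxiliary conditional-independence machinery -/

section CIAux

variable {d N : ℕ} (μ : Measure Ω) (x : ℕ → Ω → Fin d → ℝ)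

/-- Real-valued indicator of a set of sample points. -/
noncomputable def ind (s : Set Ω) : Ω → ℝ := s.indicator fun _ => 1

lemma ind_bound (s : Set Ω) : ∀ ω : Ω, ‖ind s ω‖ ≤ 1 := by
  intro ω; by_cases h : ω ∈ s <;> simp [ind, h]

lemma stronglyMeasurable_ind {m : MeasurableSpace Ω} {s : Set Ω} (hs : MeasurableSet[m] s) :
    StronglyMeasurable[m] (ind s) :=
  (stronglyMeasurable_const (β := ℝ)).indicator hs

lemma integrable_ind [IsProbabilityMeasure μ] {s : Set Ω} (hs : MeasurableSet s) :
    Integrable (ind s) μ :=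
  (integrable_const (1 : ℝ)).indicator hs

lemma aestronglyMeasurable_ind {s : Set Ω} (hs : MeasurableSet s) :
    AEStronglyMeasurable (ind s) μ :=
  (stronglyMeasurable_ind hs).aestronglyMeasurable

lemma sigmaOf_mono {S T : Set ℕ} (h : S ⊆ T) : sigmaOf x S ≤ sigmaOf x T :=
  iSup₂_le fun i hi =>
    le_iSup₂ (f := fun i (_ : i ∈ T) => MeasurableSpace.comap (x i) inferInstance) i (h hi)

lemma sigmaOf_le (hmeas : ∀ k, k ≤ N → Measurable (x k)) {S : Set ℕ}
    (hS : S ⊆ Set.Iic N) : sigmaOf x S ≤ ‹MeasurableSpace Ω› :=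
  iSup₂_le fun i hi => (hmeas i (hS hi)).comap_le

lemma sigmaOf_union (S T : Set ℕ) : sigmaOf x (S ∪ T) = sigmaOf x S ⊔ sigmaOf x T :=
  iSup_union

lemma sigmaOf_singleton (k : ℕ) :
    sigmaOf x {k} = MeasurableSpace.comap (x k) inferInstance := by
  apply le_antisymm
  · exact iSup₂_le fun i hi => by rw [Set.mem_singleton_iff.mp hi]
  · exact le_iSup₂ (f := fun i (_ : i ∈ ({k} : Set ℕ)) =>
      MeasurableSpace.comap (x i) inferInstance) k rfl

lemma measurableSet_sigmaOf_singleton {k : ℕ} {s : Set Ω} :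
    MeasurableSet[sigmaOf x {k}] s ↔
      ∃ A : Set (Fin d → ℝ), MeasurableSet A ∧ x k ⁻¹' A = s := by
  rw [sigmaOf_singleton]; exact MeasurableSpace.measurableSet_comap

lemma indicator_comp (k : ℕ) (A : Set (Fin d → ℝ)) :
    A.indicator (fun _ => (1 : ℝ)) ∘ x k = ind (x k ⁻¹' A) := by
  funext ω
  by_cases h : x k ω ∈ A <;> simp [ind, Function.comp, Set.indicator, h]

/-- `x` over `S` is conditionally independent of `x` over `T`, given `x` over `U`
(stated as an identity of conditional expectations of indicators of `σ(S)`-sets). -/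
def CI (S T U : Set ℕ) : Prop :=
  ∀ s : Set Ω, MeasurableSet[sigmaOf x S] s →
    μ[ind s | sigmaOf x (T ∪ U)] =ᵐ[μ] μ[ind s | sigmaOf x U]

variable {μ x}

lemma ci_trivial {S T U : Set ℕ} (h : T ⊆ U) : CI μ x S T U := by
  intro s _
  rw [Set.union_eq_self_of_subset_left h]

lemma ci_anti {S' S T U : Set ℕ} (h : S' ⊆ S) (hci : CI μ x S T U) : CI μ x S' T U :=
  fun s hs => hci s (sigmaOf_mono x h s hs)

lemma condEq_of_ci {k : ℕ} {S T : Set ℕ} (h : CI μ x {k} S T) :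
    CondEq μ x k (S ∪ T) T := by
  intro A hA
  have := h (x k ⁻¹' A) ((measurableSet_sigmaOf_singleton x).mpr ⟨A, hA, rfl⟩)
  rw [indicator_comp]
  exact this

lemma ci_of_condEq {k : ℕ} {S T : Set ℕ} (hTS : T ⊆ S) (h : CondEq μ x k S T) :
    CI μ x {k} S T := by
  intro s hs
  obtain ⟨A, hA, rfl⟩ := (measurableSet_sigmaOf_singleton x).mp hs
  have := h A hA
  rw [indicator_comp] at this
  rwa [Set.union_eq_self_of_subset_right hTS]

lemma condEq_of_sets_eq {k : ℕ} {S T : Set ℕ} (h : S = T) : CondEq μ x k S T := by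
  intro A hA; rw [h]

variable [IsProbabilityMeasure μ] (hmeas : ∀ k, k ≤ N → Measurable (x k))
include hmeas

lemma condEq_self {k : ℕ} {S T : Set ℕ} (hS : S ⊆ Set.Iic N) (hT : T ⊆ Set.Iic N)
    (hkS : k ∈ S) (hkT : k ∈ T) (hkN : k ≤ N) : CondEq μ x k S T := by
  intro A hA
  have hpre : ∀ {R : Set ℕ}, k ∈ R → MeasurableSet[sigmaOf x R] (x k ⁻¹' A) := by
    intro R hk
    exact sigmaOf_mono x (Set.singleton_subset_iff.mpr hk) _
      ((measurableSet_sigmaOf_singleton x).mpr ⟨A, hA, rfl⟩)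
  have hint : Integrable (ind (x k ⁻¹' A)) μ := integrable_ind μ ((hmeas k hkN) hA)
  rw [indicator_comp,
    condExp_of_stronglyMeasurable (sigmaOf_le x hmeas hS)
      (stronglyMeasurable_ind (hpre hkS)) hint,
    condExp_of_stronglyMeasurable (sigmaOf_le x hmeas hT)
      (stronglyMeasurable_ind (hpre hkT)) hint]

lemma ci_weaken {S T T' U : Set ℕ} (hT : T ⊆ Set.Iic N) (hU : U ⊆ Set.Iic N)
    (h' : T' ⊆ T) (hci : CI μ x S T U) : CI μ x S T' U := by
  intro s hs
  have h12 : sigmaOf x (T' ∪ U) ≤ sigmaOf x (T ∪ U) :=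
    sigmaOf_mono x (Set.union_subset_union_left U h')
  have h2 : sigmaOf x (T ∪ U) ≤ ‹MeasurableSpace Ω› :=
    sigmaOf_le x hmeas (Set.union_subset hT hU)
  have hU1 : sigmaOf x U ≤ sigmaOf x (T' ∪ U) := sigmaOf_mono x Set.subset_union_right
  calc μ[ind s | sigmaOf x (T' ∪ U)]
      =ᵐ[μ] μ[μ[ind s | sigmaOf x (T ∪ U)] | sigmaOf x (T' ∪ U)] :=
        (condExp_condExp_of_le h12 h2).symm
    _ =ᵐ[μ] μ[μ[ind s | sigmaOf x U] | sigmaOf x (T' ∪ U)] := condExp_congr_ae (hci s hs)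
    _ =ᵐ[μ] μ[ind s | sigmaOf x U] := by
        rw [condExp_of_stronglyMeasurable (h12.trans h2)
          (stronglyMeasurable_condExp.mono hU1) integrable_condExp]

lemma ci_contract {S T W U : Set ℕ} (h1 : CI μ x S T U) (h2 : CI μ x S W (T ∪ U)) :
    CI μ x S (T ∪ W) U := by
  intro s hs
  have e : (T ∪ W) ∪ U = W ∪ (T ∪ U) := by ext n; simp only [Set.mem_union]; tauto
  rw [e]
  exact (h2 s hs).trans (h1 s hs)

lemma ci_weakUnion {S Y W U : Set ℕ} (hY : Y ⊆ Set.Iic N) (hW : W ⊆ Set.Iic N)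
    (hU : U ⊆ Set.Iic N) (hci : CI μ x S (Y ∪ W) U) : CI μ x S Y (U ∪ W) := by
  intro s hs
  have e : Y ∪ (U ∪ W) = (Y ∪ W) ∪ U := by ext n; simp only [Set.mem_union]; tauto
  rw [e]
  refine (hci s hs).trans ?_
  have h2 := ci_weaken hmeas (Set.union_subset hY hW) hU Set.subset_union_right hci s hs
  rw [Set.union_comm U W]
  exact h2.symm

lemma ci_symm {S T U : Set ℕ} (hS : S ⊆ Set.Iic N) (hT : T ⊆ Set.Iic N)
    (hU : U ⊆ Set.Iic N) (hci : CI μ x S T U) : CI μ x T S U := by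
  intro t ht
  have hmU : sigmaOf x U ≤ ‹MeasurableSpace Ω› := sigmaOf_le x hmeas hU
  have hmTU : sigmaOf x (T ∪ U) ≤ ‹MeasurableSpace Ω› :=
    sigmaOf_le x hmeas (Set.union_subset hT hU)
  have hmSU : sigmaOf x (S ∪ U) ≤ ‹MeasurableSpace Ω› :=
    sigmaOf_le x hmeas (Set.union_subset hS hU)
  have hUTU : sigmaOf x U ≤ sigmaOf x (T ∪ U) := sigmaOf_mono x Set.subset_union_right
  have hUSU : sigmaOf x U ≤ sigmaOf x (S ∪ U) := sigmaOf_mono x Set.subset_union_right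
  have hSSU : sigmaOf x S ≤ sigmaOf x (S ∪ U) := sigmaOf_mono x Set.subset_union_left
  have hTTU : sigmaOf x T ≤ sigmaOf x (T ∪ U) := sigmaOf_mono x Set.subset_union_left
  have htamb : MeasurableSet t := sigmaOf_le x hmeas hT t ht
  have hti : Integrable (ind t) μ := integrable_ind μ htamb
  set g : Ω → ℝ := μ[ind t | sigmaOf x U] with hg_def
  have hgSM : StronglyMeasurable[sigmaOf x U] g := stronglyMeasurable_condExp
  have hgi : Integrable g μ := integrable_condExp
  -- the product rule
  have prod : ∀ s : Set Ω, MeasurableSet[sigmaOf x S] s →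
      μ[ind s * ind t | sigmaOf x U] =ᵐ[μ] μ[ind s | sigmaOf x U] * g := by
    intro s hs
    have hsamb : MeasurableSet s := sigmaOf_le x hmeas hS s hs
    have hsi : Integrable (ind s) μ := integrable_ind μ hsamb
    have hts_int : Integrable (ind t * ind s) μ :=
      hsi.bdd_mul (aestronglyMeasurable_ind μ htamb) (Filter.Eventually.of_forall (ind_bound t))
    have htSM : StronglyMeasurable[sigmaOf x (T ∪ U)] (ind t) :=
      (stronglyMeasurable_ind ht).mono hTTU
    have h1 : μ[ind t * ind s | sigmaOf x (T ∪ U)] =ᵐ[μ]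
        ind t * μ[ind s | sigmaOf x (T ∪ U)] :=
      condExp_mul_of_stronglyMeasurable_left htSM hts_int hsi
    have h1' : μ[ind t * ind s | sigmaOf x (T ∪ U)] =ᵐ[μ]
        ind t * μ[ind s | sigmaOf x U] :=
      h1.trans (Filter.EventuallyEq.mul Filter.EventuallyEq.rfl (hci s hs))
    have hcs_int : Integrable (μ[ind s | sigmaOf x U] * ind t) μ := by
      have h := (integrable_condExp (f := ind s) (m := sigmaOf x U) (μ := μ)).bdd_mul
        (aestronglyMeasurable_ind μ htamb) (Filter.Eventually.of_forall (ind_bound t))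
      have e : (μ[ind s | sigmaOf x U] * ind t) =
          fun ω => ind t ω * (μ[ind s | sigmaOf x U]) ω := by
        funext ω; exact mul_comm _ _
      rw [e]
      exact h
    calc μ[ind s * ind t | sigmaOf x U]
        = μ[ind t * ind s | sigmaOf x U] := by rw [mul_comm (ind s) (ind t)]
      _ =ᵐ[μ] μ[μ[ind t * ind s | sigmaOf x (T ∪ U)] | sigmaOf x U] :=
          (condExp_condExp_of_le hUTU hmTU).symm
      _ =ᵐ[μ] μ[ind t * μ[ind s | sigmaOf x U] | sigmaOf x U] := condExp_congr_ae h1'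
      _ = μ[μ[ind s | sigmaOf x U] * ind t | sigmaOf x U] := by
          rw [mul_comm (ind t) (μ[ind s | sigmaOf x U])]
      _ =ᵐ[μ] μ[ind s | sigmaOf x U] * μ[ind t | sigmaOf x U] :=
          condExp_mul_of_stronglyMeasurable_left stronglyMeasurable_condExp hcs_int hti
  -- the generating π-system of `σ(S ∪ U)`
  set P : Set (Set Ω) := {r | ∃ s, MeasurableSet[sigmaOf x S] s ∧
    ∃ u, MeasurableSet[sigmaOf x U] u ∧ r = s ∩ u} with hP_def
  have hgen : sigmaOf x (S ∪ U) = MeasurableSpace.generateFrom P := by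
    apply le_antisymm
    · rw [sigmaOf_union]
      apply sup_le
      · intro s hs
        exact MeasurableSpace.measurableSet_generateFrom
          ⟨s, hs, Set.univ, MeasurableSet.univ, (Set.inter_univ s).symm⟩
      · intro u hu
        exact MeasurableSpace.measurableSet_generateFrom
          ⟨Set.univ, MeasurableSet.univ, u, hu, (Set.univ_inter u).symm⟩
    · apply MeasurableSpace.generateFrom_le
      rintro r ⟨s, hs, u, hu, rfl⟩
      exact (hSSU s hs).inter (hUSU u hu)
  have hPi : IsPiSystem P := by
    rintro r1 ⟨s1, hs1, u1, hu1, rfl⟩ r2 ⟨s2, hs2, u2, hu2, rfl⟩ -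
    exact ⟨s1 ∩ s2, hs1.inter hs2, u1 ∩ u2, hu1.inter hu2, by
      ext ω; simp only [Set.mem_inter_iff]; tauto⟩
  -- equality of set integrals over `σ(S ∪ U)`
  have key : ∀ r : Set Ω, MeasurableSet[sigmaOf x (S ∪ U)] r →
      ∫ ω in r, ind t ω ∂μ = ∫ ω in r, g ω ∂μ := by
    have hbasic : ∀ r ∈ P, ∫ ω in r, ind t ω ∂μ = ∫ ω in r, g ω ∂μ := by
      rintro r ⟨s, hs, u, hu, rfl⟩
      have hsamb : MeasurableSet s := sigmaOf_le x hmeas hS s hs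
      have huamb : MeasurableSet u := hmU u hu
      have hsi : Integrable (ind s) μ := integrable_ind μ hsamb
      have hst_int : Integrable (ind s * ind t) μ :=
        hti.bdd_mul (aestronglyMeasurable_ind μ hsamb) (Filter.Eventually.of_forall (ind_bound s))
      have hsg_int : Integrable (ind s * g) μ :=
        hgi.bdd_mul (aestronglyMeasurable_ind μ hsamb) (Filter.Eventually.of_forall (ind_bound s))
      have hind_mul : ∀ f : Ω → ℝ, s.indicator f = ind s * f := by
        intro f; funext ω; by_cases h : ω ∈ s <;> simp [ind, h]
      have hL : ∫ ω in s ∩ u, ind t ω ∂μ = ∫ ω in u, (ind s * ind t) ω ∂μ := by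
        rw [Set.inter_comm, ← setIntegral_indicator hsamb, hind_mul]
      have hR : ∫ ω in s ∩ u, g ω ∂μ = ∫ ω in u, (ind s * g) ω ∂μ := by
        rw [Set.inter_comm, ← setIntegral_indicator hsamb, hind_mul]
      have hpull : μ[ind s * g | sigmaOf x U] =ᵐ[μ] μ[ind s | sigmaOf x U] * g := by
        have h1 : μ[g * ind s | sigmaOf x U] =ᵐ[μ] g * μ[ind s | sigmaOf x U] :=
          condExp_mul_of_stronglyMeasurable_left hgSM (by rwa [mul_comm] at hsg_int) hsi
        calc μ[ind s * g | sigmaOf x U] = μ[g * ind s | sigmaOf x U] := by rw [mul_comm (ind s) g]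
          _ =ᵐ[μ] g * μ[ind s | sigmaOf x U] := h1
          _ = μ[ind s | sigmaOf x U] * g := by rw [mul_comm g (μ[ind s | sigmaOf x U])]
      calc ∫ ω in s ∩ u, ind t ω ∂μ
          = ∫ ω in u, (ind s * ind t) ω ∂μ := hL
        _ = ∫ ω in u, (μ[ind s * ind t | sigmaOf x U]) ω ∂μ :=
            (setIntegral_condExp hmU hst_int hu).symm
        _ = ∫ ω in u, (μ[ind s | sigmaOf x U] * g) ω ∂μ :=
            setIntegral_congr_ae huamb ((prod s hs).mono fun ω h _ => h)
        _ = ∫ ω in u, (μ[ind s * g | sigmaOf x U]) ω ∂μ :=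
            (setIntegral_congr_ae huamb (hpull.mono fun ω h _ => h)).symm
        _ = ∫ ω in u, (ind s * g) ω ∂μ := setIntegral_condExp hmU hsg_int hu
        _ = ∫ ω in s ∩ u, g ω ∂μ := hR.symm
    refine fun r hr => MeasurableSpace.induction_on_inter
      (m := sigmaOf x (S ∪ U))
      (C := fun r _ => ∫ ω in r, ind t ω ∂μ = ∫ ω in r, g ω ∂μ)
      hgen hPi (by simp) hbasic ?_ ?_ r hr
    · intro r' hrm hC
      have hramb : MeasurableSet r' := hmSU r' hrm
      have e1 := integral_add_compl hramb hti
      have e2 := integral_add_compl hramb hgi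
      have e3 : ∫ ω, g ω ∂μ = ∫ ω, ind t ω ∂μ := integral_condExp hmU
      linarith
    · intro f hdisj hmeasf hC
      rw [integral_iUnion (fun i => hmSU _ (hmeasf i)) hdisj hti.integrableOn,
        integral_iUnion (fun i => hmSU _ (hmeasf i)) hdisj hgi.integrableOn]
      exact tsum_congr hC
  have hfin : g =ᵐ[μ] μ[ind t | sigmaOf x (S ∪ U)] :=
    ae_eq_condExp_of_forall_setIntegral_eq hmSU hti
      (fun r _ _ => hgi.integrableOn)
      (fun r hr _ => (key r hr).symm)
      ((hgSM.mono hUSU).aestronglyMeasurable)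
  exact hfin.symm

/-- The chaining lemma: a family of one-point conditional independencies spreads to
a block conditional independence. -/
lemma ci_chain {E Z : Set ℕ} {r q : ℕ} (hE : E ⊆ Set.Iic N) (hZ : Z ⊆ Set.Iic N)
    (hrZ : r ∈ Z) (hq : q ≤ N)
    (H : ∀ m, r < m → m ≤ q → CI μ x {m} E (Z ∪ Set.Icc r (m - 1))) :
    CI μ x E (Set.Icc (r + 1) q) Z := by
  induction q with
  | zero =>
      have e : Set.Icc (r + 1) 0 = (∅ : Set ℕ) := Set.Icc_eq_empty (by omega)
      rw [e]
      exact ci_trivial (Set.empty_subset _)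
  | succ q ih =>
      by_cases hrq : q + 1 ≤ r
      · have e : Set.Icc (r + 1) (q + 1) = (∅ : Set ℕ) := Set.Icc_eq_empty (by omega)
        rw [e]
        exact ci_trivial (Set.empty_subset _)
      · have hq' : q ≤ N := by omega
        have ihq : CI μ x E (Set.Icc (r + 1) q) Z :=
          ih hq' (fun m h1 h2 => H m h1 (by omega))
        have h2 := H (q + 1) (by omega) le_rfl
        have hsub1 : ({q + 1} : Set ℕ) ⊆ Set.Iic N := by
          intro n hn
          simp only [Set.mem_singleton_iff] at hn
          simp only [Set.mem_Iic]
          omega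
        have hsub2 : Set.Icc r (q + 1 - 1) ⊆ Set.Iic N := by
          intro n hn
          simp only [Set.mem_Icc] at hn
          simp only [Set.mem_Iic]
          omega
        have h2' : CI μ x E {q + 1} (Z ∪ Set.Icc r (q + 1 - 1)) :=
          ci_symm hmeas hsub1 hE (Set.union_subset hZ hsub2) h2
        have e1 : Z ∪ Set.Icc r (q + 1 - 1) = Set.Icc (r + 1) q ∪ Z := by
          ext n
          simp only [Set.mem_union, Set.mem_Icc]
          constructor
          · rintro (h | ⟨h1, h2⟩)
            · exact Or.inr h
            · rcases eq_or_lt_of_le h1 with h3 | h3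
              · exact Or.inr (h3 ▸ hrZ)
              · exact Or.inl ⟨by omega, by omega⟩
          · rintro (⟨h1, h2⟩ | h)
            · exact Or.inr ⟨by omega, by omega⟩
            · exact Or.inl h
        rw [e1] at h2'
        have hc := ci_contract hmeas ihq h2'
        rwa [show Set.Icc (r + 1) q ∪ {q + 1} = Set.Icc (r + 1) (q + 1) from by
          ext n; simp only [Set.mem_union, Set.mem_Icc, Set.mem_singleton_iff]; omega] at hc

end CIAux

/-- A zero-mean nonsingular Gaussian sequence `[x_k]`, `k ∈ [0,N]`,
is reciprocal iff it is `[k₁,N]`-CM_F for every `k₁ ∈ [0,N]` and it is CM_L. -/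
theorem stmt0 {N d : ℕ} (hN : 3 ≤ N) (hd : 1 ≤ d)
    (μ : Measure Ω) [IsProbabilityMeasure μ] (x : ℕ → Ω → Fin d → ℝ)
    (C : Matrix (Fin (N + 1) × Fin d) (Fin (N + 1) × Fin d) ℝ)
    (hx : ZMNG N d μ x C) :
    IsReciprocal μ x N ↔
      ((∀ k₁, k₁ ≤ N → IsCM μ x k₁ N k₁) ∧ IsCM μ x 0 N N) := by
  obtain ⟨hmeas, -, -⟩ := hx
  have hIcc : ∀ a b : ℕ, b ≤ N → Set.Icc a b ⊆ Set.Iic N := by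
    intro a b hb n hn
    simp only [Set.mem_Icc] at hn
    simp only [Set.mem_Iic]
    omega
  have hsing : ∀ a : ℕ, a ≤ N → ({a} : Set ℕ) ⊆ Set.Iic N := by
    intro a ha n hn
    simp only [Set.mem_singleton_iff] at hn
    simp only [Set.mem_Iic]
    omega
  have hpair : ∀ a b : ℕ, a ≤ N → b ≤ N → ({a, b} : Set ℕ) ⊆ Set.Iic N := by
    intro a b ha hb n hn
    simp only [Set.mem_insert_iff, Set.mem_singleton_iff] at hn
    simp only [Set.mem_Iic]
    omega
  constructor
  · intro hR
    constructor
    · -- `[k₁, N]`-CM_F for every `k₁`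
      intro k₁ hk₁ j k hk₁j hjk hkN
      by_cases hsmall : j ≤ k₁ + 1
      · exact condEq_of_sets_eq (by
          ext n
          simp only [Set.mem_union, Set.mem_Icc, Set.mem_singleton_iff]
          omega)
      · have hjN : j ≤ N := by omega
        have H3 : ∀ m, k₁ < m → m ≤ j - 1 →
            CI μ x {m} (Set.Icc 0 k₁ ∪ Set.Icc j N)
              (({k₁, j} : Set ℕ) ∪ Set.Icc k₁ (m - 1)) := by
          intro m h1 h2
          have ce := hR (m - 1) m j (by omega) (by omega) hjN
          have h3 := ci_of_condEq (by
            intro n hn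
            simp only [Set.mem_union, Set.mem_singleton_iff] at hn
            simp only [Set.mem_union, Set.mem_Icc]
            omega) ce
          rw [show Set.Icc 0 (m - 1) ∪ Set.Icc j N =
              (Set.Icc 0 k₁ ∪ Set.Icc j N) ∪ Set.Icc k₁ (m - 1) from by
            ext n
            simp only [Set.mem_union, Set.mem_Icc]
            omega] at h3
          have h4 := ci_weakUnion hmeas
            (Set.union_subset (hIcc 0 k₁ hk₁) (hIcc j N le_rfl))
            (hIcc k₁ (m - 1) (by omega))
            (Set.union_subset (hsing (m - 1) (by omega)) (hsing j hjN)) h3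
          rwa [show (({m - 1} : Set ℕ) ∪ {j}) ∪ Set.Icc k₁ (m - 1) =
              ({k₁, j} : Set ℕ) ∪ Set.Icc k₁ (m - 1) from by
            ext n
            simp only [Set.mem_union, Set.mem_singleton_iff, Set.mem_insert_iff,
              Set.mem_Icc]
            omega] at h4
        have hch := ci_chain hmeas
          (Set.union_subset (hIcc 0 k₁ hk₁) (hIcc j N le_rfl))
          (hpair k₁ j hk₁ hjN) (Set.mem_insert k₁ {j}) (by omega : j - 1 ≤ N) H3
        have hk' : CI μ x {k} (Set.Icc (k₁ + 1) (j - 1)) ({k₁, j} : Set ℕ) :=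
          ci_anti (by
            intro n hn
            simp only [Set.mem_singleton_iff] at hn
            simp only [Set.mem_union, Set.mem_Icc]
            omega) hch
        have h9 := condEq_of_ci hk'
        rw [show Set.Icc (k₁ + 1) (j - 1) ∪ ({k₁, j} : Set ℕ) =
            Set.Icc k₁ j ∪ {k₁} from by
          ext n
          simp only [Set.mem_union, Set.mem_Icc, Set.mem_insert_iff,
            Set.mem_singleton_iff]
          omega,
          show ({k₁, j} : Set ℕ) = {j} ∪ {k₁} from by
          ext n
          simp only [Set.mem_union, Set.mem_insert_iff, Set.mem_singleton_iff]
          tauto] at h9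
        exact h9
    · -- CM_L
      intro j k h0j hjk hkN
      rcases eq_or_lt_of_le hkN with hkN' | hkN'
      · subst hkN'
        exact condEq_self hmeas
          (Set.union_subset (hIcc 0 j (by omega)) (hsing k le_rfl))
          (Set.union_subset (hsing j (by omega)) (hsing k le_rfl))
          (Set.mem_union_right _ rfl) (Set.mem_union_right _ rfl) le_rfl
      · have ce := hR j k N hjk hkN' le_rfl
        rwa [Set.Icc_self] at ce
  · rintro ⟨hF, hL⟩ j k l hjk hkl hlN
    rcases eq_or_lt_of_le hlN with hlN' | hlN'
    · subst hlN'
      have ce := hL j k (Nat.zero_le _) hjk (le_of_lt hkl)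
      rw [Set.Icc_self]
      exact ce
    · -- `l < N`
      have hkN : k < N := lt_trans hkl hlN'
      have hjN : j < N := lt_trans hjk hkN
      -- step 2 : `x_k ⊥ x_{[l+1,N]} | (x_j, x_l)`
      have H2 : ∀ m, l < m → m ≤ N →
          CI μ x {m} (Set.Icc j l) (({j, l} : Set ℕ) ∪ Set.Icc l (m - 1)) := by
        intro m h1 h2
        have ce := hF j (by omega) (m - 1) m (by omega) (by omega) h2
        rw [show Set.Icc j (m - 1) ∪ {j} = Set.Icc j (m - 1) from by
          apply Set.union_eq_self_of_subset_right
          intro n hn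
          simp only [Set.mem_singleton_iff] at hn
          simp only [Set.mem_Icc]
          omega] at ce
        have h3 := ci_of_condEq (by
          intro n hn
          simp only [Set.mem_union, Set.mem_singleton_iff] at hn
          simp only [Set.mem_Icc]
          omega) ce
        rw [show Set.Icc j (m - 1) = Set.Icc j l ∪ Set.Icc l (m - 1) from by
          ext n
          simp only [Set.mem_union, Set.mem_Icc]
          omega] at h3
        have h4 := ci_weakUnion hmeas (hIcc j l (by omega)) (hIcc l (m - 1) (by omega))
          (Set.union_subset (hsing (m - 1) (by omega)) (hsing j (by omega))) h3
        rwa [show (({m - 1} : Set ℕ) ∪ {j}) ∪ Set.Icc l (m - 1) =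
            ({j, l} : Set ℕ) ∪ Set.Icc l (m - 1) from by
          ext n
          simp only [Set.mem_union, Set.mem_singleton_iff, Set.mem_insert_iff,
            Set.mem_Icc]
          omega] at h4
      have hC2 := ci_chain hmeas (hIcc j l (by omega)) (hpair j l (by omega) (by omega))
        (Set.mem_insert_iff.mpr (Or.inr rfl)) le_rfl H2
      have hstar : CI μ x {k} (Set.Icc (l + 1) N) ({j, l} : Set ℕ) :=
        ci_anti (by
          intro n hn
          simp only [Set.mem_singleton_iff] at hn
          simp only [Set.mem_Icc]
          omega) hC2
      -- step 1 : `x_{[0,j]} ⊥ x_k | (x_j, x_{[l,N]})`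
      have H1 : ∀ m, j < m → m ≤ N - 1 →
          CI μ x {m} (Set.Icc 0 j) (({j, N} : Set ℕ) ∪ Set.Icc j (m - 1)) := by
        intro m h1 h2
        have ce := hL (m - 1) m (Nat.zero_le _) (by omega) (by omega)
        have h3 := ci_of_condEq (by
          intro n hn
          simp only [Set.mem_union, Set.mem_singleton_iff] at hn
          simp only [Set.mem_union, Set.mem_Icc, Set.mem_singleton_iff]
          omega) ce
        rw [show Set.Icc 0 (m - 1) ∪ ({N} : Set ℕ) =
            Set.Icc 0 j ∪ (Set.Icc j (m - 1) ∪ {N}) from by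
          ext n
          simp only [Set.mem_union, Set.mem_Icc, Set.mem_singleton_iff]
          omega] at h3
        have h4 := ci_weakUnion hmeas (hIcc 0 j (by omega))
          (Set.union_subset (hIcc j (m - 1) (by omega)) (hsing N le_rfl))
          (Set.union_subset (hsing (m - 1) (by omega)) (hsing N le_rfl)) h3
        rwa [show (({m - 1} : Set ℕ) ∪ {N}) ∪ (Set.Icc j (m - 1) ∪ {N}) =
            ({j, N} : Set ℕ) ∪ Set.Icc j (m - 1) from by
          ext n
          simp only [Set.mem_union, Set.mem_singleton_iff, Set.mem_insert_iff,
            Set.mem_Icc]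
          omega] at h4
      have hC1 := ci_chain hmeas (hIcc 0 j (by omega)) (hpair j N (by omega) le_rfl)
        (Set.mem_insert j {N}) (by omega : N - 1 ≤ N) H1
      have h5 := ci_weaken hmeas (hIcc (j + 1) (N - 1) (by omega))
        (hpair j N (by omega) le_rfl)
        (by
          intro n hn
          simp only [Set.mem_union, Set.mem_singleton_iff, Set.mem_Icc] at hn
          simp only [Set.mem_Icc]
          omega : ({k} : Set ℕ) ∪ Set.Icc l (N - 1) ⊆ Set.Icc (j + 1) (N - 1)) hC1
      have h6 := ci_weakUnion hmeas (hsing k (by omega)) (hIcc l (N - 1) (by omega))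
        (hpair j N (by omega) le_rfl) h5
      have h7 := ci_symm hmeas (hIcc 0 j (by omega)) (hsing k (by omega))
        (Set.union_subset (hpair j N (by omega) le_rfl) (hIcc l (N - 1) (by omega))) h6
      rw [show ({j, N} : Set ℕ) ∪ Set.Icc l (N - 1) =
          Set.Icc (l + 1) N ∪ ({j, l} : Set ℕ) from by
        ext n
        simp only [Set.mem_union, Set.mem_insert_iff, Set.mem_singleton_iff,
          Set.mem_Icc]
        omega] at h7
      have h8 := ci_contract hmeas hstar h7
      have h9 := condEq_of_ci h8
      rw [show (Set.Icc (l + 1) N ∪ Set.Icc 0 j) ∪ ({j, l} : Set ℕ) =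
          Set.Icc 0 j ∪ Set.Icc l N from by
        ext n
        simp only [Set.mem_union, Set.mem_insert_iff, Set.mem_singleton_iff,
          Set.mem_Icc]
        omega,
        show ({j, l} : Set ℕ) = {j} ∪ {l} from Set.insert_eq j {l}] at h9
      exact h9

end CMSeqPaper
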